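/- For two median graphs (X,G) and (Y,H), a function f : X → Y is a median homomorphism (preserves the ternary median operation) if and only if the preimage under f of every half-space of Y is a half-space of X. -/

import Mathlib

open SimpleGraph

variable {X : Type*}

/-- The geodesic interval between `x` and `y`. -/
def interval (G : SimpleGraph X) (x y : X) : Set X :=
  {z | G.dist x z + G.dist z y = G.dist x y}

/-- A set is convex if it contains all geodesics between its points. -/
def IsConvexSet (G : SimpleGraph X) (A : Set X) : Prop :=
  ∀ x ∈ A, ∀ y ∈ A, interval G x y ⊆ A

/-- A median graph: connected, and every triple has a unique median. -/
def IsMedianGraph (G : SimpleGraph X) : Prop :=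
  G.Connected ∧ ∀ x y z : X, ∃! m : X,
    m ∈ interval G x y ∧ m ∈ interval G y z ∧ m ∈ interval G z x

/-- The cone at `y` away from `x`. -/
def cone (G : SimpleGraph X) (x y : X) : Set X :=
  {z | y ∈ interval G x z}

/-- A half-space: a convex set with convex complement. -/
def IsHalfspace (G : SimpleGraph X) (H : Set X) : Prop :=
  IsConvexSet G H ∧ IsConvexSet G Hᶜ

/-- Convex hull. -/
def convexHullG (G : SimpleGraph X) (A : Set X) : Set X :=
  ⋂₀ {B : Set X | IsConvexSet G B ∧ A ⊆ B}

/-- Inward edge boundary of a set. -/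
def edgeBoundaryIn (G : SimpleGraph X) (H : Set X) : Set (X × X) :=
  {e | G.Adj e.1 e.2 ∧ e.1 ∉ H ∧ e.2 ∈ H}

/-- Two sets are nested if one of the four corners is empty. -/
def Nested (A B : Set X) : Prop :=
  A ∩ B = ∅ ∨ A ∩ Bᶜ = ∅ ∨ Aᶜ ∩ B = ∅ ∨ Aᶜ ∩ Bᶜ = ∅

open Classical in
noncomputable def medianOf (G : SimpleGraph X) (x y z : X) : X :=
  if h : ∃! m : X, m ∈ interval G x y ∧ m ∈ interval G y z ∧ m ∈ interval G z x
  then h.choose else x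

open Classical in
noncomputable def projOn (G : SimpleGraph X) (A : Set X) (x : X) : X :=
  if h : ∃ p, p ∈ A ∧ ∀ a ∈ A, p ∈ interval G x a then h.choose else x


/-- Edges crossing out of a set. -/
def crossEdges (G : SimpleGraph X) (A : Set X) : Set (X × X) :=
  {e | G.Adj e.1 e.2 ∧ e.1 ∈ A ∧ e.2 ∉ A}

/-- Total vertex boundary of a set. -/
def vBoundary (G : SimpleGraph X) (A : Set X) : Set X :=
  {x | ∃ y, G.Adj x y ∧ ((x ∈ A ∧ y ∉ A) ∨ (x ∉ A ∧ y ∈ A))}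

/-- Two sets are non-nested if all four corners are nonempty. -/
def NonNested (A B : Set X) : Prop :=
  (A ∩ B).Nonempty ∧ (A ∩ Bᶜ).Nonempty ∧ (Aᶜ ∩ B).Nonempty ∧ (Aᶜ ∩ Bᶜ).Nonempty

/-- `H` is a successor of `K`: both are half-spaces, `K ⊊ H`, with no half-space
strictly in between. -/
def Successor (G : SimpleGraph X) (H K : Set X) : Prop :=
  IsHalfspace G H ∧ IsHalfspace G K ∧ K ⊂ H ∧
    ¬ ∃ L : Set X, IsHalfspace G L ∧ K ⊂ L ∧ L ⊂ H

/-- Adjacency of the hyperplanes of half-spaces `H`, `K`. -/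
def HypAdj (G : SimpleGraph X) (H K : Set X) : Prop :=
  H = K ∨ H = Kᶜ ∨ NonNested H K ∨
  Successor G H K ∨ Successor G K H ∨
  Successor G Hᶜ K ∨ Successor G K Hᶜ ∨
  Successor G H Kᶜ ∨ Successor G Kᶜ H ∨
  Successor G Hᶜ Kᶜ ∨ Successor G Kᶜ Hᶜ

/-- The Hamming cube on `{0,1}^n`: strings adjacent iff they differ in exactly one bit. -/
def hammingCube (n : ℕ) : SimpleGraph (Fin n → Bool) :=
  SimpleGraph.fromRel (fun a b => ∃! i : Fin n, a i ≠ b i)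

/-- Oriented edges `e`, `f` are parallel sides of a square (4-cycle). -/
def SquareParallel (G : SimpleGraph X) (e f : X × X) : Prop :=
  G.Adj e.1 e.2 ∧ G.Adj f.1 f.2 ∧ G.Adj e.1 f.1 ∧ G.Adj e.2 f.2 ∧ e.1 ≠ f.2 ∧ e.2 ≠ f.1

set_option maxHeartbeats 1000000
set_option linter.all false

namespace MedianHomAux

variable {G : SimpleGraph X}

lemma mem_int {x y z : X} : z ∈ interval G x y ↔ G.dist x z + G.dist z y = G.dist x y :=
  Iff.rfl

lemma int_symm {x y z : X} (h : z ∈ interval G x y) : z ∈ interval G y x := by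
  rw [mem_int] at h ⊢
  rw [dist_comm (u := y) (v := z), dist_comm (u := z) (v := x), dist_comm (u := y) (v := x)]
  omega

lemma left_mem_int (x y : X) : x ∈ interval G x y := by
  rw [mem_int, dist_self]; omega

lemma right_mem_int (x y : X) : y ∈ interval G x y := by
  rw [mem_int, dist_self]; omega

/-- z between x,y and m between x,z. -/
lemma btw1 (hc : G.Connected) {x y z m : X} (h1 : z ∈ interval G x y)
    (h2 : m ∈ interval G x z) : m ∈ interval G x y ∧ z ∈ interval G m y := by
  have t1 : G.dist m y ≤ G.dist m z + G.dist z y := hc.dist_triangle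
  have t2 : G.dist x y ≤ G.dist x m + G.dist m y := hc.dist_triangle
  have hcm : G.dist m z = G.dist z m := dist_comm
  rw [mem_int] at h1 h2 ⊢
  rw [mem_int]
  omega

/-- z between x,y and m between z,y. -/
lemma btw2 (hc : G.Connected) {x y z m : X} (h1 : z ∈ interval G x y)
    (h2 : m ∈ interval G z y) : z ∈ interval G x m ∧ m ∈ interval G x y := by
  have t1 : G.dist x m ≤ G.dist x z + G.dist z m := hc.dist_triangle
  have t2 : G.dist x y ≤ G.dist x m + G.dist m y := hc.dist_triangle
  rw [mem_int] at h1 h2 ⊢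
  rw [mem_int]
  omega

lemma medianOf_spec (hG : IsMedianGraph G) (x y z : X) :
    medianOf G x y z ∈ interval G x y ∧ medianOf G x y z ∈ interval G y z ∧
      medianOf G x y z ∈ interval G z x := by
  rw [medianOf, dif_pos (hG.2 x y z)]
  exact (hG.2 x y z).choose_spec.1

lemma medianOf_unique (hG : IsMedianGraph G) {x y z m : X}
    (h1 : m ∈ interval G x y) (h2 : m ∈ interval G y z) (h3 : m ∈ interval G z x) :
    m = medianOf G x y z := by
  rw [medianOf, dif_pos (hG.2 x y z)]
  exact (hG.2 x y z).choose_spec.2 m ⟨h1, h2, h3⟩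

/-- no vertex is equidistant from the endpoints of an edge -/
lemma adj_dist_ne (hG : IsMedianGraph G) {u v : X} (huv : G.Adj u v) (w : X) :
    G.dist w u ≠ G.dist w v := by
  intro h
  have h1 : G.dist u v = 1 := dist_eq_one_iff_adj.2 huv
  obtain ⟨m, sp1, sp2, sp3⟩ : ∃ m, m ∈ interval G w u ∧ m ∈ interval G u v ∧
      m ∈ interval G v w := ⟨_, medianOf_spec hG w u v⟩
  rw [mem_int] at sp1 sp2 sp3
  -- m ∈ [u,v] with dist u v = 1, so m = u or m = v
  have hm0 : G.dist u m = 0 ∨ G.dist m v = 0 := by omega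
  rcases hm0 with h0 | h0
  · have he : u = m := (hG.1.dist_eq_zero_iff).1 h0
    have c1 : G.dist v w = G.dist w v := dist_comm
    have c2 : G.dist v u = G.dist u v := dist_comm
    have c3 : G.dist u w = G.dist w u := dist_comm
    rw [← he] at sp3
    omega
  · have he : m = v := (hG.1.dist_eq_zero_iff).1 h0
    have c1 : G.dist w u = G.dist u w := dist_comm
    have c2 : G.dist u v = G.dist v u := dist_comm
    rw [he] at sp1
    omega

/-- distances to the two ends of an edge differ by exactly one -/
lemma adj_dist_succ (hG : IsMedianGraph G) {u v : X} (huv : G.Adj u v) (w : X) :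
    G.dist w v = G.dist w u + 1 ∨ G.dist w u = G.dist w v + 1 := by
  have hne := adj_dist_ne hG huv w
  have h1 : G.dist u v = 1 := dist_eq_one_iff_adj.2 huv
  have h2 : G.dist v u = 1 := dist_comm.trans h1
  have t1 : G.dist w v ≤ G.dist w u + G.dist u v := hG.1.dist_triangle
  have t2 : G.dist w u ≤ G.dist w v + G.dist v u := hG.1.dist_triangle
  omega

/-- first step on a geodesic -/
lemma exists_step (hc : G.Connected) {x y : X} (h : x ≠ y) :
    ∃ x₁ : X, G.Adj x x₁ ∧ G.dist x x₁ = 1 ∧ G.dist x₁ y + 1 = G.dist x y := by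
  have hd : G.dist x y ≠ 0 := fun h0 => h (hc.dist_eq_zero_iff.1 h0)
  obtain ⟨p, hp⟩ := exists_walk_of_dist_ne_zero hd
  cases p with
  | nil => exact absurd rfl h
  | @cons _ x₁ _ hadj q =>
    refine ⟨x₁, hadj, dist_eq_one_iff_adj.2 hadj, ?_⟩
    have h1 : G.dist x₁ y ≤ q.length := dist_le q
    have h2 : q.length + 1 = G.dist x y := by simpa using hp
    have h3 : G.dist x y ≤ G.dist x x₁ + G.dist x₁ y := hc.dist_triangle
    have h4 : G.dist x x₁ = 1 := dist_eq_one_iff_adj.2 hadj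
    omega

end MedianHomAux

namespace MedianHomAux

variable {G : SimpleGraph X}

/-- Djoković half-space determined by an (oriented) edge. -/
def Wset (G : SimpleGraph X) (u v : X) : Set X := {w | G.dist w u < G.dist w v}

lemma mem_W {u v w : X} : w ∈ Wset G u v ↔ G.dist w u < G.dist w v := Iff.rfl

lemma W_dist (hG : IsMedianGraph G) {u v w : X} (huv : G.Adj u v)
    (hw : w ∈ Wset G u v) : G.dist w v = G.dist w u + 1 := by
  rcases adj_dist_succ hG huv w with h | h
  · exact h
  · exact absurd hw (by rw [mem_W]; omega)

lemma notW_dist (hG : IsMedianGraph G) {u v w : X} (huv : G.Adj u v)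
    (hw : w ∉ Wset G u v) : G.dist w u = G.dist w v + 1 := by
  rw [mem_W] at hw
  rcases adj_dist_succ hG huv w with h | h
  · omega
  · exact h

lemma u_mem_xv (hG : IsMedianGraph G) {u v x : X} (huv : G.Adj u v)
    (hx : x ∈ Wset G u v) : u ∈ interval G x v := by
  rw [mem_int]
  have h1 : G.dist u v = 1 := dist_eq_one_iff_adj.2 huv
  have h2 := W_dist hG huv hx
  omega

/-- The key lemma: there is no edge `x z` with `x` inside a Djoković half-space,
`z` outside it, and `z` on a geodesic from `x` to another point `y` inside. -/
lemma no_bad (hG : IsMedianGraph G) : ∀ n : ℕ, ∀ u v x z y : X,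
    G.Adj u v → G.Adj x z → x ∈ Wset G u v → z ∉ Wset G u v →
    z ∈ interval G x y → y ∈ Wset G u v → G.dist x y = n → False := by
  have hc := hG.1
  intro n
  induction n using Nat.strong_induction_on with
  | _ n IH =>
  intro u v x z y huv hxz hx hz hzy hy hn
  have duv : G.dist u v = 1 := dist_eq_one_iff_adj.2 huv
  have hxv : G.dist x v = G.dist x u + 1 := W_dist hG huv hx
  have hzu : G.dist z u = G.dist z v + 1 := notW_dist hG huv hz
  have hyv : G.dist y v = G.dist y u + 1 := W_dist hG huv hy
  have hdxz : G.dist x z = 1 := dist_eq_one_iff_adj.2 hxz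
  have cux : G.dist u x = G.dist x u := dist_comm
  have cuz : G.dist u z = G.dist z u := dist_comm
  have cvx : G.dist v x = G.dist x v := dist_comm
  have cvz : G.dist v z = G.dist z v := dist_comm
  have e1 := adj_dist_succ hG hxz u
  have e2 := adj_dist_succ hG hxz v
  have key1 : G.dist z u = G.dist x u + 1 := by omega
  have key2 : G.dist z v = G.dist x u := by omega
  rw [mem_int] at hzy
  -- the median of z, u, y
  obtain ⟨m, sm1, sm2, sm3⟩ : ∃ m, m ∈ interval G z u ∧ m ∈ interval G u y ∧
      m ∈ interval G y z := ⟨_, medianOf_spec hG z u y⟩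
  have hu_yv : u ∈ interval G y v := u_mem_xv hG huv hy
  have hmW : m ∈ Wset G u v := by
    have h2 := (btw1 hc hu_yv (int_symm sm2)).2
    rw [mem_int] at h2
    rw [mem_W]
    omega
  have hbtw := btw2 hc hzy (int_symm sm3)
  by_cases hmy : m = y
  · -- m = y, so y lies on a geodesic from z to u
    have hyzu : y ∈ interval G z u := hmy ▸ sm1
    rw [mem_int] at hyzu
    have hs1 : G.dist z y ≠ 0 := by
      intro h0
      exact hz ((hc.dist_eq_zero_iff.1 h0) ▸ hy)
    by_cases hs : G.dist z y = 1
    · -- the K₂,₃ case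
      have hyu : G.dist y u = G.dist x u := by omega
      rcases Nat.eq_zero_or_pos (G.dist x u) with hk0 | hk1
      · -- degenerate
        have : x = u := hc.dist_eq_zero_iff.1 (by omega)
        have : y = u := hc.dist_eq_zero_iff.1 (by omega)
        have hxy0 : G.dist x y = 0 := by
          rw [‹x = u›, ‹y = u›, dist_self]
        omega
      -- R := median of x, y, u
      obtain ⟨R, sR1, sR2, sR3⟩ : ∃ R, R ∈ interval G x y ∧ R ∈ interval G y u ∧
          R ∈ interval G u x := ⟨_, medianOf_spec hG x y u⟩
      rw [mem_int] at sR1 sR2 sR3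
      have cyR : G.dist y R = G.dist R y := dist_comm
      have cuR : G.dist u R = G.dist R u := dist_comm
      have cRx : G.dist R x = G.dist x R := dist_comm
      have hdxy : G.dist x y = 2 := by omega
      have hxR : G.dist x R = 1 := by omega
      have hRy : G.dist R y = 1 := by omega
      have hRu : G.dist R u + 1 = G.dist x u := by omega
      have hu_xv : u ∈ interval G x v := u_mem_xv hG huv hx
      have hRxu : R ∈ interval G x u := int_symm (by rw [mem_int]; omega)
      have hRv : G.dist R v = G.dist x u := by
        have h2 := (btw1 hc hu_xv hRxu).2
        rw [mem_int] at h2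
        omega
      have hzR : z ≠ R := by
        intro h; rw [h] at key1; omega
      have hnadjzR : ¬ G.Adj z R := by
        intro h
        have := adj_dist_succ hG h u
        have c1 : G.dist u z = G.dist z u := dist_comm
        have c2 : G.dist u R = G.dist R u := dist_comm
        omega
      have hdzR : G.dist z R = 2 := by
        have t1 : G.dist z R ≤ G.dist z x + G.dist x R := hc.dist_triangle
        have czx : G.dist z x = G.dist x z := dist_comm
        have h0 : G.dist z R ≠ 0 := fun h => hzR (hc.dist_eq_zero_iff.1 h)
        have h1 : G.dist z R ≠ 1 := fun h => hnadjzR (dist_eq_one_iff_adj.1 h)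
        omega
      -- t := median of z, R, v
      obtain ⟨t, st1, st2, st3⟩ : ∃ t, t ∈ interval G z R ∧ t ∈ interval G R v ∧
          t ∈ interval G v z := ⟨_, medianOf_spec hG z R v⟩
      rw [mem_int] at st1 st2 st3
      have cRt : G.dist R t = G.dist t R := dist_comm
      have cvt : G.dist v t = G.dist t v := dist_comm
      have ctz : G.dist t z = G.dist z t := dist_comm
      have hzt : G.dist z t = 1 := by omega
      have htR : G.dist t R = 1 := by omega
      have htv : G.dist t v + 1 = G.dist x u := by omega
      have hAzt : G.Adj z t := dist_eq_one_iff_adj.1 hzt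
      have hARt : G.Adj R t := dist_eq_one_iff_adj.1 (by
        have : G.dist R t = 1 := by omega
        exact this)
      have htu : G.dist t u = G.dist x u := by
        have a1 := adj_dist_succ hG hAzt u
        have a2 := adj_dist_succ hG hARt u
        have c1 : G.dist u t = G.dist t u := dist_comm
        have c2 : G.dist u z = G.dist z u := dist_comm
        have c3 : G.dist u R = G.dist R u := dist_comm
        omega
      -- distances from x and y to t are 2
      have hxt : G.dist x t = 2 := by
        have t1 : G.dist x t ≤ G.dist x z + G.dist z t := hc.dist_triangle
        have h0 : G.dist x t ≠ 0 := by
          intro h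
          have : x = t := hc.dist_eq_zero_iff.1 h
          rw [this] at hxv
          omega
        have h1 : G.dist x t ≠ 1 := by
          intro h
          have := adj_dist_succ hG (dist_eq_one_iff_adj.1 h) u
          have c1 : G.dist u t = G.dist t u := dist_comm
          omega
        omega
      have hyz1 : G.dist y z = 1 := dist_comm.trans hs
      have hyt : G.dist y t = 2 := by
        have t1 : G.dist y t ≤ G.dist y z + G.dist z t := hc.dist_triangle
        have h0 : G.dist y t ≠ 0 := by
          intro h
          have : y = t := hc.dist_eq_zero_iff.1 h
          rw [this] at hyv
          omega
        have h1 : G.dist y t ≠ 1 := by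
          intro h
          have := adj_dist_succ hG (dist_eq_one_iff_adj.1 h) u
          have c1 : G.dist u t = G.dist t u := dist_comm
          have c2 : G.dist u y = G.dist y u := dist_comm
          omega
        omega
      -- both z and R are medians of (x, y, t): contradiction with uniqueness
      have ctx : G.dist t x = G.dist x t := dist_comm
      have czx2 : G.dist z x = G.dist x z := dist_comm
      have cty : G.dist t y = G.dist y t := dist_comm
      have hz1 : z ∈ interval G x y := by rw [mem_int]; omega
      have hz2 : z ∈ interval G y t := by rw [mem_int]; omega
      have hz3 : z ∈ interval G t x := by rw [mem_int]; omega
      have hR1 : R ∈ interval G x y := by rw [mem_int]; omega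
      have hR2 : R ∈ interval G y t := by rw [mem_int]; omega
      have hR3 : R ∈ interval G t x := by rw [mem_int]; omega
      have ez := medianOf_unique hG hz1 hz2 hz3
      have eR := medianOf_unique hG hR1 hR2 hR3
      exact hzR (ez.trans eR.symm)
    · -- d z y ≥ 2
      have hzyne : z ≠ y := fun h => hs1 (by rw [h, dist_self])
      obtain ⟨y₁, hAzy₁, hdzy₁, hdy₁y⟩ := exists_step hc hzyne
      have hy₁zy : y₁ ∈ interval G z y := by rw [mem_int]; omega
      have hy₁u : G.dist y₁ u = G.dist x u := by
        have h1 := (btw1 hc (by rw [mem_int]; omega : y ∈ interval G z u) hy₁zy).1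
        rw [mem_int] at h1
        omega
      have hxy₁ne : x ≠ y₁ := by
        intro h
        rw [← h] at hdy₁y
        omega
      have hnadjxy₁ : ¬ G.Adj x y₁ := by
        intro h
        have := adj_dist_succ hG h u
        have c1 : G.dist u x = G.dist x u := dist_comm
        have c2 : G.dist u y₁ = G.dist y₁ u := dist_comm
        omega
      have hdxy₁ : G.dist x y₁ = 2 := by
        have t1 : G.dist x y₁ ≤ G.dist x z + G.dist z y₁ := hc.dist_triangle
        have h0 : G.dist x y₁ ≠ 0 := fun h => hxy₁ne (hc.dist_eq_zero_iff.1 h)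
        have h1 : G.dist x y₁ ≠ 1 := fun h => hnadjxy₁ (dist_eq_one_iff_adj.1 h)
        omega
      have hzxy₁ : z ∈ interval G x y₁ := by rw [mem_int]; omega
      by_cases hy₁W : y₁ ∈ Wset G u v
      · exact IH 2 (by omega) u v x z y₁ huv hxz hx hz hzxy₁ hy₁W hdxy₁
      · -- build the median S of (x, y₁, u) and recurse
        have hy₁vu : G.dist y₁ u = G.dist y₁ v + 1 := notW_dist hG huv hy₁W
        obtain ⟨S, sS1, sS2, sS3⟩ : ∃ S, S ∈ interval G x y₁ ∧ S ∈ interval G y₁ u ∧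
            S ∈ interval G u x := ⟨_, medianOf_spec hG x y₁ u⟩
        rw [mem_int] at sS1 sS2 sS3
        have cy₁S : G.dist y₁ S = G.dist S y₁ := dist_comm
        have cuS : G.dist u S = G.dist S u := dist_comm
        have cSx : G.dist S x = G.dist x S := dist_comm
        have hxS : G.dist x S = 1 := by omega
        have hSy₁ : G.dist S y₁ = 1 := by omega
        have hSu : G.dist S u + 1 = G.dist x u := by omega
        have hu_xv : u ∈ interval G x v := u_mem_xv hG huv hx
        have hSxu : S ∈ interval G x u := int_symm (by rw [mem_int]; omega)
        have hSW : S ∈ Wset G u v := by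
          have h2 := (btw1 hc hu_xv hSxu).2
          rw [mem_int] at h2
          rw [mem_W]
          omega
        have hSy : G.dist S y = G.dist z y := by
          have t1 : G.dist S y ≤ G.dist S y₁ + G.dist y₁ y := hc.dist_triangle
          have t2 : G.dist x y ≤ G.dist x S + G.dist S y := hc.dist_triangle
          omega
        have hy₁Sy : y₁ ∈ interval G S y := by rw [mem_int]; omega
        have hASy₁ : G.Adj S y₁ := dist_eq_one_iff_adj.1 hSy₁
        exact IH (G.dist S y) (by omega) u v S y₁ y huv hASy₁ hSW hy₁W hy₁Sy hy rfl
  · -- m ≠ y : recurse with m in place of y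
    have h2 := hbtw.2
    rw [mem_int] at h2
    have hmyne : G.dist m y ≠ 0 := fun h => hmy (hc.dist_eq_zero_iff.1 h)
    exact IH (G.dist x m) (by omega) u v x z m huv hxz hx hz hbtw.1 hmW rfl

end MedianHomAux

namespace MedianHomAux

variable {G : SimpleGraph X}

lemma W_convex (hG : IsMedianGraph G) {u v : X} (huv : G.Adj u v) :
    IsConvexSet G (Wset G u v) := by
  have hc := hG.1
  intro x hx y hy z hz
  by_contra hzW
  -- induction on distance from x to z
  have main : ∀ r : ℕ, ∀ x : X, x ∈ Wset G u v → z ∈ interval G x y →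
      G.dist x z = r → False := by
    intro r
    induction r using Nat.strong_induction_on with
    | _ r IH =>
    intro x hx hzxy hr
    have hxzne : x ≠ z := by
      intro h; exact hzW (h ▸ hx)
    obtain ⟨x₁, hAxx₁, hdxx₁, hdx₁z⟩ := exists_step hc hxzne
    have hx₁xz : x₁ ∈ interval G x z := by rw [mem_int]; omega
    obtain ⟨hx₁xy, hzx₁y⟩ := btw1 hc hzxy hx₁xz
    by_cases hx₁W : x₁ ∈ Wset G u v
    · exact IH (G.dist x₁ z) (by omega) x₁ hx₁W hzx₁y rfl
    · exact no_bad hG (G.dist x y) u v x x₁ y huv hAxx₁ hx hx₁W hx₁xy hy rfl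
  exact main (G.dist x z) x hx hz rfl

lemma W_compl (hG : IsMedianGraph G) {u v : X} (huv : G.Adj u v) :
    (Wset G u v)ᶜ = Wset G v u := by
  ext w
  have := adj_dist_ne hG huv w
  simp only [Set.mem_compl_iff, mem_W, Wset, Set.mem_setOf_eq]
  omega

lemma W_halfspace (hG : IsMedianGraph G) {u v : X} (huv : G.Adj u v) :
    IsHalfspace G (Wset G u v) := by
  refine ⟨W_convex hG huv, ?_⟩
  rw [W_compl hG huv]
  exact W_convex hG huv.symm

/-- separation: every point outside a geodesic interval is separated from it
by a half-space containing the endpoints. -/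
lemma separation (hG : IsMedianGraph G) {a b w : X} (hw : w ∉ interval G a b) :
    ∃ H : Set X, IsHalfspace G H ∧ a ∈ H ∧ b ∈ H ∧ w ∉ H := by
  have hc := hG.1
  obtain ⟨m, sm1, sm2, sm3⟩ : ∃ m, m ∈ interval G a b ∧ m ∈ interval G b w ∧
      m ∈ interval G w a := ⟨_, medianOf_spec hG a b w⟩
  have hmw : m ≠ w := by
    intro h; exact hw (h ▸ sm1)
  obtain ⟨c, hAmc, hdmc, hdcw⟩ := exists_step hc hmw
  refine ⟨Wset G m c, W_halfspace hG hAmc, ?_, ?_, ?_⟩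
  · -- a ∈ W m c
    have hmaw : m ∈ interval G a w := int_symm sm3
    have hcmw : c ∈ interval G m w := by rw [mem_int]; omega
    have := (btw2 hc hmaw hcmw).1
    rw [mem_int] at this
    rw [mem_W]
    omega
  · have hcmw : c ∈ interval G m w := by rw [mem_int]; omega
    have := (btw2 hc sm2 hcmw).1
    rw [mem_int] at this
    rw [mem_W]
    omega
  · rw [mem_W]
    have c1 : G.dist w m = G.dist m w := dist_comm
    have c2 : G.dist w c = G.dist c w := dist_comm
    omega

end MedianHomAux

theorem medianHom_iff_preimage_halfspace {Y : Type*} (G : SimpleGraph X) (G' : SimpleGraph Y)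
    (hG : IsMedianGraph G) (hG' : IsMedianGraph G') (f : X → Y) :
    (∀ x y z : X, f (medianOf G x y z) = medianOf G' (f x) (f y) (f z)) ↔
    (∀ H : Set Y, IsHalfspace G' H → IsHalfspace G (f ⁻¹' H)) := by
  open MedianHomAux in
  constructor
  · intro hf H hH
    have key : ∀ A : Set Y, IsConvexSet G' A → IsConvexSet G (f ⁻¹' A) := by
      intro A hA a ha b hb z hz
      have h1 : z ∈ interval G a z := right_mem_int a z
      have h2 : z ∈ interval G z b := left_mem_int z b
      have h3 : z ∈ interval G b a := int_symm hz
      have hmz : z = medianOf G a z b := medianOf_unique hG h1 h2 h3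
      have hfz : f z = medianOf G' (f a) (f z) (f b) := by
        conv_lhs => rw [hmz]
        exact hf a z b
      have hmem := (medianOf_spec hG' (f a) (f z) (f b)).2.2
      rw [← hfz] at hmem
      exact hA (f b) hb (f a) ha hmem
    refine ⟨key H hH.1, ?_⟩
    have : (f ⁻¹' H)ᶜ = f ⁻¹' Hᶜ := rfl
    rw [this]
    exact key Hᶜ hH.2
  · intro hpre x y z
    obtain ⟨s1, s2, s3⟩ := medianOf_spec hG x y z
    have main : ∀ a b : X, ∀ c : X, c ∈ interval G a b → f c ∈ interval G' (f a) (f b) := by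
      intro a b c hcab
      by_contra hno
      obtain ⟨H, hH, haH, hbH, hwH⟩ := separation hG' hno
      exact hwH ((hpre H hH).1 a haH b hbH hcab)
    exact medianOf_unique hG' (main x y _ s1) (main y z _ s2) (main z x _ s3)
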